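/- If G is a connected bipartite graph containing a cycle and f' assigns 1 to one designated vertex u of G and 2 to every other vertex, then m(G,f') = 3; that is, G is [f',2]-paintable but not [f',3]-paintable. -/

import Mathlib

/- # Preliminaries: the online list-coloring (painting) game -/

namespace PaintGame

open SimpleGraph

/-- `X` is an independent set of vertices of `G`. -/
def IndepOn {V : Type} (G : SimpleGraph V) (X : Finset V) : Prop :=
  ∀ u ∈ X, ∀ w ∈ X, ¬ G.Adj u w

/-- Decrease the remaining mark-capacity of every vertex in the marked set `M` by one. -/
def decMark {V : Type} [DecidableEq V] (f : V → ℕ) (M : Finset V) : V → ℕ :=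
  fun v => if v ∈ M then f v - 1 else f v

theorem decMark_lt {V : Type} [Fintype V] [DecidableEq V] (f : V → ℕ) (M : Finset V)
    (hne : M.Nonempty) (hf : ∀ v ∈ M, 1 ≤ f v) :
    ∑ v, decMark f M v < ∑ v, f v := by
  obtain ⟨v₀, hv₀⟩ := hne
  apply Finset.sum_lt_sum
  · intro i _
    unfold decMark
    split <;> omega
  · refine ⟨v₀, Finset.mem_univ v₀, ?_⟩
    have := hf v₀ hv₀
    simp only [decMark, if_pos hv₀]
    omega

/-- Painter wins the (unbounded) painting game on `G` from the position in which `U` is the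
set of uncolored vertices and `f v` is the number of further times `v` may be marked.
Each round, Lister marks a nonempty set `M` of uncolored vertices, each of which may still
be marked; Painter then colors an independent subset `X` of `M`.  Painter wins when every
vertex is colored; Painter has lost if some uncolored vertex can no longer be marked. -/
def PaintFrom {V : Type} [Fintype V] [DecidableEq V] (G : SimpleGraph V)
    (f : V → ℕ) (U : Finset V) : Prop :=
  U = ∅ ∨ ((∀ v ∈ U, 1 ≤ f v) ∧
    ∀ M : Finset V, M ⊆ U → (hne : M.Nonempty) → (hf : ∀ v ∈ M, 1 ≤ f v) →
      ∃ X : Finset V, X ⊆ M ∧ IndepOn G X ∧ PaintFrom G (decMark f M) (U \ X))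
termination_by ∑ v, f v
decreasing_by exact decMark_lt f M hne hf

/-- `G` is `f`-paintable: Painter can guarantee that every vertex of `G` gets colored
while no vertex `v` is marked more than `f v` times. -/
def Paintable {V : Type} [Fintype V] [DecidableEq V] (G : SimpleGraph V) (f : V → ℕ) : Prop :=
  PaintFrom G f Finset.univ

/-- Painter wins the painting game on `G` lasting exactly `t` further rounds, where `U`
is the set of uncolored vertices and each vertex `v` must be marked in exactly `f v` of the
remaining rounds.  Each round Lister marks a nonempty set `M` of vertices that can still be
marked (colored vertices may be marked, since the marked sets are the color classes of a
fixed list assignment using exactly `t` colors); Painter colors an independent set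
`X ⊆ M` of uncolored vertices.  At the end, Painter wins if every vertex got colored, or by
default if Lister failed to mark every vertex `v` exactly `f v` times. -/
def PaintFromIn {V : Type} [DecidableEq V] (G : SimpleGraph V) :
    ℕ → (V → ℕ) → Finset V → Prop
  | 0, f, U => U = ∅ ∨ ∃ v, f v ≠ 0
  | (t + 1), f, U =>
      ∀ M : Finset V, M.Nonempty → (∀ v ∈ M, 1 ≤ f v) →
        ∃ X : Finset V, X ⊆ M ∩ U ∧ IndepOn G X ∧
          PaintFromIn G t (decMark f M) (U \ X)

/-- `G` is `[f,t]`-paintable: Painter can guarantee that every vertex gets colored in the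
painting game on `G` lasting exactly `t` rounds, in which Lister must mark each vertex `v`
in exactly `f v` of the `t` (nonempty) marked sets. -/
def PaintableIn {V : Type} [Fintype V] [DecidableEq V]
    (G : SimpleGraph V) (f : V → ℕ) (t : ℕ) : Prop :=
  PaintFromIn G t f Finset.univ

/-- `m(G,f)`: the minimum `t ≥ max {f v : v ∈ V(G)}` for which `G` is not
`[f,t]`-paintable. -/
noncomputable def mval {V : Type} [Fintype V] [DecidableEq V]
    (G : SimpleGraph V) (f : V → ℕ) : ℕ :=
  sInf {t | (∀ v, f v ≤ t) ∧ ¬ PaintableIn G f t}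

/-- `M(G,f)`: the maximum `t` for which `G` is not `[f,t]`-paintable. -/
noncomputable def Mval {V : Type} [Fintype V] [DecidableEq V]
    (G : SimpleGraph V) (f : V → ℕ) : ℕ :=
  sSup {t | ¬ PaintableIn G f t}

/-- `ListerForce G f U c`: in the painting game on `G` (uncolored set `U`, each vertex `v`
markable at most `f v` more times), Lister can force the appearance of an uncolorable vertex
(an uncolored vertex that can no longer be marked) while spending at most `c` in total,
where a round with marked set `M` costs `|M| - 1`. -/
def ListerForce {V : Type} [Fintype V] [DecidableEq V] (G : SimpleGraph V)
    (f : V → ℕ) (U : Finset V) (c : ℕ) : Prop :=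
  (∃ v ∈ U, f v = 0) ∨
    ∃ M : Finset V, M ⊆ U ∧ ∃ hne : M.Nonempty, ∃ hf : ∀ v ∈ M, 1 ≤ f v,
      ∃ c', M.card - 1 + c' ≤ c ∧
        ∀ X : Finset V, X ⊆ M → IndepOn G X →
          ListerForce G (decMark f M) (U \ X) c'
termination_by ∑ v, f v
decreasing_by exact decMark_lt f M hne hf

/-- `q(G,f)`: the minimum total cost `Σᵢ (|Vᵢ| - 1)` that Lister can guarantee while
forcing an uncolorable vertex, over plays in which each vertex `v` is marked at most
`f v` times. -/
noncomputable def qval {V : Type} [Fintype V] [DecidableEq V]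
    (G : SimpleGraph V) (f : V → ℕ) : ℕ :=
  sInf {c | ListerForce G f Finset.univ c}

/- # Graph containments -/

/-- `G` contains an odd cycle. -/
def HasOddCycle {V : Type} (G : SimpleGraph V) : Prop :=
  ∃ (v : V) (c : G.Walk v v), c.IsCycle ∧ Odd c.length

/-- `G` contains a triangle `C₃`. -/
def HasTriangle {V : Type} (G : SimpleGraph V) : Prop :=
  ∃ u v w : V, G.Adj u v ∧ G.Adj v w ∧ G.Adj u w

/-- `G` contains the theta graph `θ_{p,q,r}`: two vertices joined by three internally
disjoint paths with `p`, `q` and `r` edges respectively. -/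
def HasTheta {V : Type} (G : SimpleGraph V) (p q r : ℕ) : Prop :=
  ∃ (u v : V) (P Q R : G.Walk u v),
    P.IsPath ∧ Q.IsPath ∧ R.IsPath ∧
    P.length = p ∧ Q.length = q ∧ R.length = r ∧
    (∀ x, x ∈ P.support → x ∈ Q.support → x = u ∨ x = v) ∧
    (∀ x, x ∈ P.support → x ∈ R.support → x = u ∨ x = v) ∧
    (∀ x, x ∈ Q.support → x ∈ R.support → x = u ∨ x = v)

/-- `G` contains a graph of the form `C_m·P_k·C_n`: two cycles joined by a path, the
cycles being vertex disjoint, except that when the path is trivial (`k = 1`) the two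
cycles share exactly one vertex. -/
def HasDumbbell {V : Type} (G : SimpleGraph V) : Prop :=
  ∃ (a b : V) (c : G.Walk a a) (d : G.Walk b b) (W : G.Walk a b),
    c.IsCycle ∧ d.IsCycle ∧ W.IsPath ∧
    (∀ x, x ∈ c.support → x ∈ d.support → x = a ∧ x = b) ∧
    (∀ x, x ∈ W.support → x ∈ c.support → x = a) ∧
    (∀ x, x ∈ W.support → x ∈ d.support → x = b)

/-- `G` contains a copy of `H` as a (not necessarily induced) subgraph. -/
def ContainsCopy {W V : Type} (H : SimpleGraph W) (G : SimpleGraph V) : Prop :=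
  ∃ φ : H →g G, Function.Injective φ

/-- `G` contains a member of the family `𝔉₃`: some `θ_{p,q,r}` that is not isomorphic to
any `θ_{2,2,2k}`. -/
def ContainsF3 {V : Type} (G : SimpleGraph V) : Prop :=
  ∃ p q r : ℕ, HasTheta G p q r ∧ ∀ k : ℕ, ({p, q, r} : Multiset ℕ) ≠ {2, 2, 2 * k}

/-- `G` contains a member of the family `𝔉₄ = {θ_{2,2,2k} : k ≥ 2}`. -/
def ContainsF4 {V : Type} (G : SimpleGraph V) : Prop :=
  ∃ k : ℕ, 2 ≤ k ∧ HasTheta G 2 2 (2 * k)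

/- # The core of a graph -/

open Classical in
/-- Delete from `S` all vertices having exactly one neighbour (in `G`) inside `S`. -/
noncomputable def coreStep {V : Type} [DecidableEq V] (G : SimpleGraph V)
    (S : Finset V) : Finset V :=
  S.filter fun v => ¬ ((S.filter fun w => G.Adj v w).card = 1)

/-- The vertex set of the core of `G`: iteratively delete all vertices of degree 1. -/
noncomputable def coreSet {V : Type} [Fintype V] [DecidableEq V] (G : SimpleGraph V) :
    Finset V :=
  (coreStep G)^[Fintype.card V] Finset.univ

/-- The core of `G`: the subgraph of `G` obtained by the iterated removal of all
vertices of degree 1. -/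
noncomputable def coreGraph {V : Type} [Fintype V] [DecidableEq V] (G : SimpleGraph V) :
    SimpleGraph ↥((coreSet G : Set V)) :=
  G.induce (coreSet G : Set V)

end PaintGame

open SimpleGraph PaintGame
section Aux
open SimpleGraph Finset

private lemma zmod2_add_two (a : ZMod 2) : a + 1 + 1 = a := by revert a; decide

private lemma zmod2_step {a b : ZMod 2} (h : a ≠ b) : b = a + 1 := by
  revert h; revert a b; decide

lemma walk_parity {V : Type} {G : SimpleGraph V} (g : V → ZMod 2) {p q : V} (W : G.Walk p q)
    (h : ∀ d ∈ W.darts, g d.toProd.1 ≠ g d.toProd.2) : g q = g p + W.length := by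
  induction W with
  | nil => simp
  | @cons a b c ha W ih =>
      have h1 : g b = g a + 1 := zmod2_step (h ⟨(a, b), ha⟩ (by simp [SimpleGraph.Walk.darts_cons]))
      have h2 := ih (fun d hd => h d (by simp [SimpleGraph.Walk.darts_cons, hd]))
      rw [h2, h1]
      push_cast [SimpleGraph.Walk.length_cons]
      ring

lemma mem_rotate_iff {V : Type} [DecidableEq V] {G : SimpleGraph V} {v a u : V}
    {c : G.Walk v v} (h : u ∈ c.support) :
    a ∈ (c.rotate _ h).support ↔ a ∈ c.support := by
  rw [SimpleGraph.Walk.rotate, SimpleGraph.Walk.mem_support_append_iff]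
  conv_rhs => rw [← c.take_spec h]
  rw [SimpleGraph.Walk.mem_support_append_iff]
  tauto

lemma exists_good_w {V : Type} [DecidableEq V] {G : SimpleGraph V} (hconn : G.Connected)
    (col : V → ZMod 2) (hcol : ∀ {a b : V}, G.Adj a b → col a ≠ col b)
    (hcyc : ¬ G.IsAcyclic) (u : V) :
    ∃ (w x y : V) (Wx : G.Walk u x) (Wy : G.Walk u y),
      w ≠ u ∧ col w = col u ∧ G.Adj w x ∧ G.Adj w y ∧ x ≠ y ∧
      w ∉ Wx.support ∧ w ∉ Wy.support := by
  classical
  simp only [SimpleGraph.IsAcyclic, not_forall, not_not] at hcyc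
  obtain ⟨v, K, hK⟩ := hcyc
  -- choose z on the cycle minimizing distance to u
  have hsupne : K.support.toFinset.Nonempty := ⟨v, by simp⟩
  obtain ⟨z, hzmem', hzmin'⟩ := K.support.toFinset.exists_min_image (G.dist u) hsupne
  rw [List.mem_toFinset] at hzmem'
  have hzmin : ∀ y ∈ K.support, G.dist u z ≤ G.dist u y := by
    intro y hy; exact hzmin' y (List.mem_toFinset.2 hy)
  obtain ⟨P, hP⟩ := hconn.exists_walk_length_eq_dist u z
  -- P avoids every cycle vertex other than z
  have hPavoid : ∀ w', w' ∈ K.support → w' ≠ z → w' ∉ P.support := by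
    intro w' hw'K hne hw'P
    have h1 : G.dist u w' ≤ (P.takeUntil w' hw'P).length := SimpleGraph.dist_le _
    have hsplit := P.take_spec hw'P
    have hlen : (P.takeUntil w' hw'P).length + (P.dropUntil w' hw'P).length = P.length := by
      rw [← SimpleGraph.Walk.length_append, hsplit]
    have hd : (P.dropUntil w' hw'P).length ≠ 0 := by
      intro h0; exact hne (SimpleGraph.Walk.eq_of_length_eq_zero h0)
    have := hzmin w' hw'K
    omega
  -- rotate at z
  have hK₁ : (K.rotate _ hzmem').IsCycle := hK.rotate hzmem'
  have hlen₁ := hK₁.three_le_length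
  obtain ⟨s₁, h₁, T₁, hT₁⟩ := SimpleGraph.Walk.not_nil_iff.mp
    (show ¬(K.rotate _ hzmem').Nil by rw [SimpleGraph.Walk.nil_iff_length_eq]; omega)
  have hlenT₁ : T₁.length + 1 = (K.rotate _ hzmem').length := by
    rw [hT₁, SimpleGraph.Walk.length_cons]
  obtain ⟨s₂, h₂, T₂, hT₂⟩ := SimpleGraph.Walk.not_nil_iff.mp (show ¬T₁.Nil by
    rw [SimpleGraph.Walk.nil_iff_length_eq]; omega)
  have hlenT₂ : T₂.length + 1 = T₁.length := by rw [hT₂, SimpleGraph.Walk.length_cons]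
  obtain ⟨s₃, h₃, T₃, hT₃⟩ := SimpleGraph.Walk.not_nil_iff.mp (show ¬T₂.Nil by
    rw [SimpleGraph.Walk.nil_iff_length_eq]; omega)
  -- nodup facts
  have hnodup : (K.rotate _ hzmem').support.tail.Nodup := hK₁.support_nodup
  rw [hT₁, SimpleGraph.Walk.support_cons, List.tail_cons, hT₂,
    SimpleGraph.Walk.support_cons, hT₃, SimpleGraph.Walk.support_cons] at hnodup
  have hzT₃ : z ∈ T₃.support := T₃.end_mem_support
  have hs₁z : s₁ ≠ z := h₁.ne'
  have hs₂z : s₂ ≠ z := by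
    rcases List.nodup_cons.mp hnodup with ⟨-, hnodup'⟩
    rcases List.nodup_cons.mp hnodup' with ⟨hs₂notin, -⟩
    exact fun h => hs₂notin (h ▸ hzT₃)
  -- colours along the cycle
  have hcol₁ : col s₁ = col z + 1 := zmod2_step (hcol h₁)
  have hcol₂ : col s₂ = col z := by
    rw [zmod2_step (hcol h₂), hcol₁, zmod2_add_two]
  -- choose w
  set w : V := if col z = col u then s₂ else s₁ with hwdef
  have hw_mem₁ : w ∈ (K.rotate _ hzmem').support := by
    rw [hT₁, SimpleGraph.Walk.support_cons, hT₂, SimpleGraph.Walk.support_cons]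
    by_cases h : col z = col u <;> simp [hwdef, h]
  have hw_ne_z : w ≠ z := by
    by_cases h : col z = col u <;> simp [hwdef, h, hs₁z, hs₂z]
  have hcolw : col w = col u := by
    by_cases h : col z = col u
    · simp [hwdef, h, hcol₂, h]
    · simp only [hwdef, if_neg h, hcol₁]
      exact (zmod2_step h).symm
  have hw_memK : w ∈ K.support := (mem_rotate_iff hzmem').mp hw_mem₁
  have hwu : w ≠ u := by
    intro h
    have h0 : G.dist u z ≤ G.dist u w := hzmin w hw_memK
    rw [h, SimpleGraph.dist_self] at h0
    exact hw_ne_z (h ▸ ((hconn.dist_eq_zero_iff).mp (Nat.le_zero.mp h0)).symm ▸ rfl)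
  -- rotate at w
  have hK₂ : ((K.rotate _ hzmem').rotate _ hw_mem₁).IsCycle := hK₁.rotate hw_mem₁
  have hlen₂ := hK₂.three_le_length
  obtain ⟨x, hwx, T, hKT⟩ := SimpleGraph.Walk.not_nil_iff.mp
    (show ¬((K.rotate _ hzmem').rotate _ hw_mem₁).Nil by
      rw [SimpleGraph.Walk.nil_iff_length_eq]; omega)
  have hlenT : T.length + 1 = ((K.rotate _ hzmem').rotate _ hw_mem₁).length := by
    rw [hKT, SimpleGraph.Walk.length_cons]
  obtain ⟨y, hwy, S, hrev⟩ := SimpleGraph.Walk.not_nil_iff.mp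
    (show ¬T.reverse.Nil by
      rw [SimpleGraph.Walk.nil_iff_length_eq, SimpleGraph.Walk.length_reverse]; omega)
  have hlenS : S.length + 1 = T.length := by
    have := congr_arg SimpleGraph.Walk.length hrev
    rw [SimpleGraph.Walk.length_reverse, SimpleGraph.Walk.length_cons] at this
    omega
  -- nodup facts
  have hTnodup : T.support.Nodup := by
    have h := hK₂.support_nodup
    rwa [hKT, SimpleGraph.Walk.support_cons, List.tail_cons] at h
  have hrevnodup : (w :: S.support).Nodup := by
    have h := List.nodup_reverse.mpr hTnodup
    rw [← SimpleGraph.Walk.support_reverse, hrev, SimpleGraph.Walk.support_cons] at h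
    exact h
  have hwS : w ∉ S.support := (List.nodup_cons.mp hrevnodup).1
  have hSnodup : S.support.Nodup := (List.nodup_cons.mp hrevnodup).2
  -- x ≠ y
  have hxy : x ≠ y := by
    intro hxyeq
    subst hxyeq
    cases S with
    | nil => simp only [SimpleGraph.Walk.length_nil] at hlenS; omega
    | cons h' S' =>
        rw [SimpleGraph.Walk.support_cons, List.nodup_cons] at hSnodup
        exact hSnodup.1 S'.end_mem_support
  -- z lies on S
  have hzK₂ : z ∈ ((K.rotate _ hzmem').rotate _ hw_mem₁).support :=
    (mem_rotate_iff hw_mem₁).mpr ((K.rotate _ hzmem').start_mem_support)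
  have hzT : z ∈ T.support := by
    rw [hKT, SimpleGraph.Walk.support_cons, List.mem_cons] at hzK₂
    rcases hzK₂ with h | h
    · exact absurd h.symm hw_ne_z
    · exact h
  have hzS : z ∈ S.support := by
    have : z ∈ T.reverse.support := by
      rw [SimpleGraph.Walk.support_reverse, List.mem_reverse]; exact hzT
    rw [hrev, SimpleGraph.Walk.support_cons, List.mem_cons] at this
    rcases this with h | h
    · exact absurd h.symm hw_ne_z
    · exact h
  -- the walks from u
  have hwP : w ∉ P.support := hPavoid w hw_memK hw_ne_z
  refine ⟨w, x, y, P.append (S.dropUntil z hzS), P.append (S.takeUntil z hzS).reverse,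
    hwu, hcolw, hwx, hwy, hxy, ?_, ?_⟩
  · rw [SimpleGraph.Walk.mem_support_append_iff]
    rintro (h | h)
    · exact hwP h
    · exact hwS (SimpleGraph.Walk.support_dropUntil_subset S hzS h)
  · rw [SimpleGraph.Walk.mem_support_append_iff]
    rintro (h | h)
    · exact hwP h
    · rw [SimpleGraph.Walk.support_reverse, List.mem_reverse] at h
      exact hwS (SimpleGraph.Walk.support_takeUntil_subset S hzS h)

private lemma zmod2_eq_of_ne {p q r : ZMod 2} (h1 : p ≠ r) (h2 : q ≠ r) : p = q := by
  revert h1 h2; revert p q r; decide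

lemma painter_two {V : Type} [Fintype V] [DecidableEq V] {G : SimpleGraph V}
    (col : V → ZMod 2) (hcol : ∀ {a b : V}, G.Adj a b → col a ≠ col b) (u : V) :
    PaintGame.PaintableIn G (fun v => if v = u then 1 else 2) 2 := by
  classical
  set f : V → ℕ := fun v => if v = u then 1 else 2 with hf
  set A : Finset V := Finset.univ.filter (fun v => col v = col u) with hA
  have hmemA : ∀ a, a ∈ A ↔ col a = col u := by intro a; simp [hA]
  show PaintGame.PaintFromIn G 2 f Finset.univ
  intro M₁ hne₁ hmk₁
  have main : ∀ S : Finset V,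
      (∀ a ∈ S, ∀ b ∈ S, ¬G.Adj a b) →
      (∀ a, a ∉ S → ∀ b, b ∉ S → ¬G.Adj a b) →
      (u ∈ M₁ → u ∈ S) → (u ∉ M₁ → u ∉ S) →
      ∃ X : Finset V, X ⊆ M₁ ∩ Finset.univ ∧ PaintGame.IndepOn G X ∧
        PaintGame.PaintFromIn G 1 (PaintGame.decMark f M₁) (Finset.univ \ X) := by
    intro S hS hSc hSu hS'u
    refine ⟨M₁ ∩ S, by rw [Finset.inter_univ]; exact Finset.inter_subset_left, ?_, ?_⟩
    · intro a ha b hb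
      exact hS a (Finset.mem_inter.mp ha).2 b (Finset.mem_inter.mp hb).2
    · intro M₂ hne₂ hmk₂
      refine ⟨M₂ ∩ (Finset.univ \ (M₁ ∩ S)) ∩ (Finset.univ \ S),
        Finset.inter_subset_left, ?_, ?_⟩
      · intro a ha b hb
        have ha' : a ∉ S := (Finset.mem_sdiff.mp (Finset.mem_inter.mp ha).2).2
        have hb' : b ∉ S := (Finset.mem_sdiff.mp (Finset.mem_inter.mp hb).2).2
        exact hSc a ha' b hb'
      · by_cases hU : (Finset.univ \ (M₁ ∩ S)) \
            (M₂ ∩ (Finset.univ \ (M₁ ∩ S)) ∩ (Finset.univ \ S)) = ∅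
        · exact Or.inl hU
        · refine Or.inr ?_
          obtain ⟨v, hv⟩ := Finset.nonempty_of_ne_empty hU
          rw [Finset.mem_sdiff, Finset.mem_sdiff] at hv
          obtain ⟨⟨-, hv1⟩, hv2⟩ := hv
          refine ⟨v, ?_⟩
          by_cases hvS : v ∈ S
          · have hvM₁ : v ∉ M₁ := fun h => hv1 (Finset.mem_inter.mpr ⟨h, hvS⟩)
            have hvu : v ≠ u := fun he => (hS'u (he ▸ hvM₁)) (he ▸ hvS)
            simp only [PaintGame.decMark, if_neg hvM₁, hf, if_neg hvu]
            split_ifs <;> simp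
          · have hvM₂ : v ∉ M₂ := by
              intro h
              exact hv2 (Finset.mem_inter.mpr ⟨Finset.mem_inter.mpr
                ⟨h, Finset.mem_sdiff.mpr ⟨Finset.mem_univ v, hv1⟩⟩,
                Finset.mem_sdiff.mpr ⟨Finset.mem_univ v, hvS⟩⟩)
            by_cases hvu : v = u
            · have huM₁ : u ∉ M₁ := fun h => hvS (hvu ▸ hSu h)
              have hvM₁ : v ∉ M₁ := hvu ▸ huM₁
              subst hvu
              simp [PaintGame.decMark, hvM₂, hvM₁, hf]
            · simp only [PaintGame.decMark, if_neg hvM₂, hf, if_neg hvu]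
              split_ifs <;> simp
  by_cases huM₁ : u ∈ M₁
  · refine main A ?_ ?_ (fun _ => (hmemA u).mpr rfl) (fun h => absurd huM₁ h)
    · intro a ha b hb hadj
      exact hcol hadj (((hmemA a).mp ha).trans ((hmemA b).mp hb).symm)
    · intro a ha b hb hadj
      exact hcol hadj (zmod2_eq_of_ne (fun h => ha ((hmemA a).mpr h))
        (fun h => hb ((hmemA b).mpr h)))
  · refine main (Finset.univ \ A) ?_ ?_ (fun h => absurd h huM₁) ?_
    · intro a ha b hb hadj
      have ha' : a ∉ A := (Finset.mem_sdiff.mp ha).2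
      have hb' : b ∉ A := (Finset.mem_sdiff.mp hb).2
      exact hcol hadj (zmod2_eq_of_ne (fun h => ha' ((hmemA a).mpr h))
        (fun h => hb' ((hmemA b).mpr h)))
    · intro a ha b hb hadj
      have ha' : a ∈ A := by
        by_contra h; exact ha (Finset.mem_sdiff.mpr ⟨Finset.mem_univ a, h⟩)
      have hb' : b ∈ A := by
        by_contra h; exact hb (Finset.mem_sdiff.mpr ⟨Finset.mem_univ b, h⟩)
      exact hcol hadj (((hmemA a).mp ha').trans ((hmemA b).mp hb').symm)
    · intro _ h
      exact (Finset.mem_sdiff.mp h).2 ((hmemA u).mpr rfl)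

lemma lister_three {V : Type} [Fintype V] [DecidableEq V] {G : SimpleGraph V}
    (col : V → ZMod 2) (hcol : ∀ {a b : V}, G.Adj a b → col a ≠ col b)
    {u w x y : V} (Wx : G.Walk u x) (Wy : G.Walk u y)
    (hwu : w ≠ u) (hcolw : col w = col u) (hwx : G.Adj w x) (hwy : G.Adj w y)
    (hxy : x ≠ y) (hWx : w ∉ Wx.support) (hWy : w ∉ Wy.support) :
    ¬ PaintGame.PaintableIn G (fun v => if v = u then 1 else 2) 3 := by
  classical
  set f : V → ℕ := fun v => if v = u then 1 else 2 with hf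
  intro hP
  have hP3 : ∀ M : Finset V, M.Nonempty → (∀ v ∈ M, 1 ≤ f v) →
      ∃ X : Finset V, X ⊆ M ∩ Finset.univ ∧ PaintGame.IndepOn G X ∧
        PaintGame.PaintFromIn G 2 (PaintGame.decMark f M) (Finset.univ \ X) := hP
  have hxw : x ≠ w := hwx.ne'
  have hyw : y ≠ w := hwy.ne'
  -- Round 1 : mark everything except w
  obtain ⟨X₁, hX₁sub, hX₁ind, h2⟩ := hP3 (Finset.univ.erase w)
    ⟨u, Finset.mem_erase.mpr ⟨Ne.symm hwu, Finset.mem_univ u⟩⟩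
    (fun v _ => by by_cases h : v = u <;> simp [hf, h])
  rw [Finset.inter_univ] at hX₁sub
  have hwX₁ : w ∉ X₁ := fun h => (Finset.mem_erase.mp (hX₁sub h)).1 rfl
  have h2' : ∀ M : Finset V, M.Nonempty →
      (∀ v ∈ M, 1 ≤ PaintGame.decMark f (Finset.univ.erase w) v) →
      ∃ X : Finset V, X ⊆ M ∩ (Finset.univ \ X₁) ∧ PaintGame.IndepOn G X ∧
        PaintGame.PaintFromIn G 1
          (PaintGame.decMark (PaintGame.decMark f (Finset.univ.erase w)) M)
          ((Finset.univ \ X₁) \ X) := h2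
  -- the all-marks-used computation for the sequence  erase w, erase u, {w}
  have hall : ∀ v, PaintGame.decMark (PaintGame.decMark (PaintGame.decMark f
      (Finset.univ.erase w)) (Finset.univ.erase u)) {w} v = 0 := by
    intro v
    by_cases h1 : v = u
    · subst h1
      simp [PaintGame.decMark, Finset.mem_erase, Finset.notMem_erase, hf, Ne.symm hwu]
    · by_cases h2 : v = w
      · subst h2
        simp [PaintGame.decMark, Finset.notMem_erase, Finset.mem_erase, hf, hwu]
      · simp [PaintGame.decMark, Finset.mem_erase, Finset.mem_singleton, h1, h2, hf]
  -- marks are available for the second move  erase u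
  have hmk2 : ∀ v ∈ Finset.univ.erase u, 1 ≤ PaintGame.decMark f (Finset.univ.erase w) v := by
    intro v hv
    have hvu : v ≠ u := (Finset.mem_erase.mp hv).1
    by_cases h2 : v = w <;>
      simp [PaintGame.decMark, Finset.mem_erase, hf, hvu, h2, Finset.notMem_erase, hwu]
  by_cases huX : u ∈ X₁
  · by_cases hE : ∃ a b : V, a ∉ X₁ ∧ b ∉ X₁ ∧ a ≠ w ∧ b ≠ w ∧ G.Adj a b
    · -- an edge of uncoloured vertices avoiding w : mark everything except u
      obtain ⟨a, b, haX, hbX, haw, hbw, hab⟩ := hE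
      obtain ⟨X₂, hX₂sub, hX₂ind, h1⟩ := h2' (Finset.univ.erase u)
        ⟨w, Finset.mem_erase.mpr ⟨hwu, Finset.mem_univ w⟩⟩ hmk2
      have h1' : ∀ M : Finset V, M.Nonempty →
          (∀ v ∈ M, 1 ≤ PaintGame.decMark (PaintGame.decMark f (Finset.univ.erase w))
            (Finset.univ.erase u) v) →
          ∃ X : Finset V, X ⊆ M ∩ ((Finset.univ \ X₁) \ X₂) ∧ PaintGame.IndepOn G X ∧
            PaintGame.PaintFromIn G 0
              (PaintGame.decMark (PaintGame.decMark (PaintGame.decMark f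
                (Finset.univ.erase w)) (Finset.univ.erase u)) M)
              (((Finset.univ \ X₁) \ X₂) \ X) := h1
      obtain ⟨X₃, hX₃sub, hX₃ind, h0⟩ := h1' {w} (Finset.singleton_nonempty w)
        (by
          intro v hv
          rw [Finset.mem_singleton] at hv
          subst hv
          simp [PaintGame.decMark, Finset.mem_erase, Finset.notMem_erase, hf, hwu])
      have h0' : (((Finset.univ \ X₁) \ X₂) \ X₃) = ∅ ∨
          ∃ v, PaintGame.decMark (PaintGame.decMark (PaintGame.decMark f
            (Finset.univ.erase w)) (Finset.univ.erase u)) {w} v ≠ 0 := h0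
      -- the vertex of {a,b} not coloured in round 2 stays uncoloured forever
      set c : V := if a ∈ X₂ then b else a with hc
      have hcX₂ : c ∉ X₂ := by
        by_cases h : a ∈ X₂
        · simp only [hc, if_pos h]
          intro hbX₂
          exact hX₂ind a h b hbX₂ hab
        · simp only [hc, if_neg h]; exact h
      have hcX₁ : c ∉ X₁ := by by_cases h : a ∈ X₂ <;> simp [hc, h, haX, hbX]
      have hcw : c ≠ w := by by_cases h : a ∈ X₂ <;> simp [hc, h, haw, hbw]
      have hcU₃ : c ∈ ((Finset.univ \ X₁) \ X₂) \ X₃ := by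
        have hcX₃ : c ∉ X₃ := fun h =>
          hcw (Finset.mem_singleton.mp ((Finset.mem_inter.mp (hX₃sub h)).1))
        simp [Finset.mem_sdiff, hcX₁, hcX₂, hcX₃]
      rcases h0' with h | ⟨v, hv⟩
      · rw [h] at hcU₃; exact absurd hcU₃ (Finset.notMem_empty c)
      · exact hv (hall v)
    · by_cases hxyU : x ∉ X₁ ∧ y ∉ X₁
      · -- both endpoints x and y uncoloured : mark everything except u and y
        obtain ⟨hxX, hyX⟩ := hxyU
        have hyu : y ≠ u := fun h => hyX (h ▸ huX)
        have hxu : x ≠ u := fun h => hxX (h ▸ huX)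
        obtain ⟨X₂, hX₂sub, hX₂ind, h1⟩ := h2' ((Finset.univ.erase u).erase y)
          ⟨w, Finset.mem_erase.mpr ⟨Ne.symm hyw,
            Finset.mem_erase.mpr ⟨hwu, Finset.mem_univ w⟩⟩⟩
          (fun v hv => hmk2 v (Finset.mem_of_mem_erase hv))
        have h1' : ∀ M : Finset V, M.Nonempty →
            (∀ v ∈ M, 1 ≤ PaintGame.decMark (PaintGame.decMark f (Finset.univ.erase w))
              ((Finset.univ.erase u).erase y) v) →
            ∃ X : Finset V, X ⊆ M ∩ ((Finset.univ \ X₁) \ X₂) ∧ PaintGame.IndepOn G X ∧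
              PaintGame.PaintFromIn G 0
                (PaintGame.decMark (PaintGame.decMark (PaintGame.decMark f
                  (Finset.univ.erase w)) ((Finset.univ.erase u).erase y)) M)
                (((Finset.univ \ X₁) \ X₂) \ X) := h1
        obtain ⟨X₃, hX₃sub, hX₃ind, h0⟩ := h1' {w, y} ⟨w, by simp⟩
          (by
            intro v hv
            rw [Finset.mem_insert, Finset.mem_singleton] at hv
            rcases hv with h | h <;> subst h
            · simp [PaintGame.decMark, Finset.mem_erase, Finset.notMem_erase, hf,
                hwu, Ne.symm hyw]
            · simp [PaintGame.decMark, Finset.mem_erase, Finset.notMem_erase, hf,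
                hyw, hyu])
        have h0' : (((Finset.univ \ X₁) \ X₂) \ X₃) = ∅ ∨
            ∃ v, PaintGame.decMark (PaintGame.decMark (PaintGame.decMark f
              (Finset.univ.erase w)) ((Finset.univ.erase u).erase y)) {w, y} v ≠ 0 := h0
        have hall₂ : ∀ v, PaintGame.decMark (PaintGame.decMark (PaintGame.decMark f
            (Finset.univ.erase w)) ((Finset.univ.erase u).erase y)) {w, y} v = 0 := by
          intro v
          by_cases h1 : v = u
          · subst h1
            simp [PaintGame.decMark, Finset.mem_erase, Finset.notMem_erase, hf,
              Ne.symm hwu, Ne.symm hyu]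
          · by_cases h2 : v = w
            · subst h2
              simp [PaintGame.decMark, Finset.notMem_erase, Finset.mem_erase, hf,
                hwu, Ne.symm hyw]
            · by_cases h3 : v = y
              · subst h3
                simp [PaintGame.decMark, Finset.mem_erase, Finset.notMem_erase, hf,
                  hyw, hyu]
              · simp [PaintGame.decMark, Finset.mem_erase, Finset.mem_insert,
                  Finset.mem_singleton, h1, h2, h3, hf]
        -- some vertex remains uncoloured
        have hne : (((Finset.univ \ X₁) \ X₂) \ X₃).Nonempty := by
          by_cases hxX₂ : x ∈ X₂
          · have hwX₂ : w ∉ X₂ := fun h => hX₂ind w h x hxX₂ hwx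
            have hyX₂ : y ∉ X₂ := fun h =>
              Finset.notMem_erase y _ (Finset.mem_inter.mp (hX₂sub h)).1
            have hwy' : ¬ (w ∈ X₃ ∧ y ∈ X₃) := fun ⟨h1, h2⟩ => hX₃ind w h1 y h2 hwy
            by_cases hwX₃ : w ∈ X₃
            · refine ⟨y, ?_⟩
              have hyX₃ : y ∉ X₃ := fun h => hwy' ⟨hwX₃, h⟩
              simp [Finset.mem_sdiff, hyX, hyX₂, hyX₃]
            · refine ⟨w, ?_⟩
              simp [Finset.mem_sdiff, hwX₁, hwX₂, hwX₃]
          · refine ⟨x, ?_⟩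
            have hxX₃ : x ∉ X₃ := by
              intro h
              have := (Finset.mem_inter.mp (hX₃sub h)).1
              rw [Finset.mem_insert, Finset.mem_singleton] at this
              rcases this with h' | h'
              · exact hxw h'
              · exact hxy h'
            simp [Finset.mem_sdiff, hxX, hxX₂, hxX₃]
        rcases h0' with h | ⟨v, hv⟩
        · rw [h] at hne; exact absurd hne Finset.not_nonempty_empty
        · exact hv (hall₂ v)
      · -- no uncoloured edge avoiding w and one of x, y coloured : parity contradiction
        push_neg at hE
        have parity : ∀ (x' : V) (W : G.Walk u x'), G.Adj w x' → w ∉ W.support →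
            x' ∈ X₁ → False := by
          intro x' W hadj hWsup hx'
          have hdart : ∀ d ∈ W.darts,
              (fun v => if v ∈ X₁ then (0 : ZMod 2) else 1) d.toProd.1 ≠
              (fun v => if v ∈ X₁ then (0 : ZMod 2) else 1) d.toProd.2 := by
            intro d hd
            have hadj' : G.Adj d.toProd.1 d.toProd.2 := d.adj
            have h1 : d.toProd.1 ∈ W.support :=
              SimpleGraph.Walk.dart_fst_mem_support_of_mem_darts W hd
            have h2 : d.toProd.2 ∈ W.support :=
              SimpleGraph.Walk.dart_snd_mem_support_of_mem_darts W hd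
            have h1w : d.toProd.1 ≠ w := fun h => hWsup (h ▸ h1)
            have h2w : d.toProd.2 ≠ w := fun h => hWsup (h ▸ h2)
            by_cases ha : d.toProd.1 ∈ X₁ <;> by_cases hb : d.toProd.2 ∈ X₁
            · exact absurd hadj' (hX₁ind _ ha _ hb)
            · simp [ha, hb]
            · simp [ha, hb]
            · exact absurd hadj' (hE _ _ ha hb h1w h2w)
          have hpar₁ := walk_parity (fun v => if v ∈ X₁ then (0 : ZMod 2) else 1) W hdart
          have hpar₂ := walk_parity col W (fun d _ => hcol d.adj)
          simp only [if_pos hx', if_pos huX] at hpar₁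
          rw [zero_add] at hpar₁
          rw [← hpar₁, add_zero] at hpar₂
          exact hcol hadj (hcolw.trans hpar₂.symm)
        rcases not_and_or.mp hxyU with h | h
        · exact parity x Wx hwx hWx (Classical.not_not.mp h)
        · exact parity y Wy hwy hWy (Classical.not_not.mp h)
  · -- u was marked but not coloured in round 1
    obtain ⟨X₂, hX₂sub, hX₂ind, h1⟩ := h2' (Finset.univ.erase u)
      ⟨w, Finset.mem_erase.mpr ⟨hwu, Finset.mem_univ w⟩⟩ hmk2
    have h1' : ∀ M : Finset V, M.Nonempty →
        (∀ v ∈ M, 1 ≤ PaintGame.decMark (PaintGame.decMark f (Finset.univ.erase w))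
          (Finset.univ.erase u) v) →
        ∃ X : Finset V, X ⊆ M ∩ ((Finset.univ \ X₁) \ X₂) ∧ PaintGame.IndepOn G X ∧
          PaintGame.PaintFromIn G 0
            (PaintGame.decMark (PaintGame.decMark (PaintGame.decMark f
              (Finset.univ.erase w)) (Finset.univ.erase u)) M)
            (((Finset.univ \ X₁) \ X₂) \ X) := h1
    obtain ⟨X₃, hX₃sub, hX₃ind, h0⟩ := h1' {w} (Finset.singleton_nonempty w)
      (by
        intro v hv
        rw [Finset.mem_singleton] at hv
        subst hv
        simp [PaintGame.decMark, Finset.mem_erase, Finset.notMem_erase, hf, hwu])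
    have h0' : (((Finset.univ \ X₁) \ X₂) \ X₃) = ∅ ∨
        ∃ v, PaintGame.decMark (PaintGame.decMark (PaintGame.decMark f
          (Finset.univ.erase w)) (Finset.univ.erase u)) {w} v ≠ 0 := h0
    have huU₃ : u ∈ ((Finset.univ \ X₁) \ X₂) \ X₃ := by
      have huX₂ : u ∉ X₂ := fun h =>
        Finset.notMem_erase u _ (Finset.mem_inter.mp (hX₂sub h)).1
      have huX₃ : u ∉ X₃ := fun h =>
        hwu (Finset.mem_singleton.mp ((Finset.mem_inter.mp (hX₃sub h)).1)).symm
      simp [Finset.mem_sdiff, huX, huX₂, huX₃]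
    rcases h0' with h | ⟨v, hv⟩
    · rw [h] at huU₃; exact absurd huU₃ (Finset.notMem_empty u)
    · exact hv (hall v)

theorem mval_connected_bipartite_with_cycle' {V : Type} [Fintype V] [DecidableEq V]
    (G : SimpleGraph V) (hconn : G.Connected) (hbip : G.Colorable 2)
    (hcyc : ¬ G.IsAcyclic) (u : V) :
    PaintGame.mval G (fun v => if v = u then 1 else 2) = 3 ∧
    PaintGame.PaintableIn G (fun v => if v = u then 1 else 2) 2 ∧
    ¬ PaintGame.PaintableIn G (fun v => if v = u then 1 else 2) 3 := by
  classical
  obtain ⟨C⟩ := hbip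
  set col : V → ZMod 2 := fun v => ((C v : Fin 2) : ZMod 2) with hcoldef
  have hcol : ∀ {a b : V}, G.Adj a b → col a ≠ col b := by
    intro a b hab
    have h := C.valid hab
    have key : ∀ p q : Fin 2, p ≠ q → ((p : ZMod 2) ≠ (q : ZMod 2)) := by decide
    exact key _ _ h
  obtain ⟨w, x, y, Wx, Wy, hwu, hcolw, hwx, hwy, hxy, hWx, hWy⟩ :=
    exists_good_w hconn col hcol hcyc u
  have p2 := painter_two col hcol u
  have np3 := lister_three col hcol Wx Wy hwu hcolw hwx hwy hxy hWx hWy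
  refine ⟨?_, p2, np3⟩
  rw [PaintGame.mval]
  show sInf {t | (∀ v : V, (if v = u then 1 else 2 : ℕ) ≤ t) ∧
      ¬ PaintGame.PaintableIn G (fun v => if v = u then 1 else 2) t} = 3
  set SS : Set ℕ := {t | (∀ v : V, (if v = u then 1 else 2 : ℕ) ≤ t) ∧
      ¬ PaintGame.PaintableIn G (fun v => if v = u then 1 else 2) t} with hSS
  have h3 : 3 ∈ SS := by
    refine ⟨fun v => ?_, np3⟩
    by_cases h : v = u <;> simp [h]
  have hmem := Nat.sInf_mem (⟨3, h3⟩ : SS.Nonempty)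
  have hle : sInf SS ≤ 3 := Nat.sInf_le h3
  obtain ⟨hm1, hm2⟩ := hmem
  have h2' := hm1 w
  simp only [if_neg hwu] at h2'
  have hcases : sInf SS = 2 ∨ sInf SS = 3 := by omega
  rcases hcases with h | h
  · rw [h] at hm2; exact absurd p2 hm2
  · exact h

end Aux

/-- Lemma `bip1`.  If `G` is a connected bipartite graph containing a
cycle and `f'` assigns `1` to one designated vertex `u` of `G` and `2` to every other
vertex, then `m(G,f') = 3`; that is, `G` is `[f',2]`-paintable but not `[f',3]`-paintable. -/
theorem mval_connected_bipartite_with_cycle {V : Type} [Fintype V] [DecidableEq V]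
    (G : SimpleGraph V) (hconn : G.Connected) (hbip : G.Colorable 2)
    (hcyc : ¬ G.IsAcyclic) (u : V) :
    PaintGame.mval G (fun v => if v = u then 1 else 2) = 3 ∧
    PaintGame.PaintableIn G (fun v => if v = u then 1 else 2) 2 ∧
    ¬ PaintGame.PaintableIn G (fun v => if v = u then 1 else 2) 3 := by
  exact mval_connected_bipartite_with_cycle' G hconn hbip hcyc u
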